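/- Let α = (α_j)_{j≥1} be nonnegative reals with ∑_{j≥1} α_j < 1. Then ∑_{u finite ⊂ ℕ} |u|! · ∏_{j∈u} α_j ≤ 1/(1 − ∑_{j≥1} α_j), where the sum is over all finite subsets u of ℕ (including the empty set, contributing 1). -/

import Mathlib

open Finset

private lemma key_identity (α : ℕ → ℝ) (s : Finset ℕ) (k : ℕ) :
    ∑ v ∈ s.powersetCard k, ∑ j ∈ s \ v, (α j * ∏ i ∈ v, α i)
      = ∑ u ∈ s.powersetCard (k + 1), (u.card : ℝ) * ∏ i ∈ u, α i := by
  have hR : ∀ u ∈ s.powersetCard (k + 1), (u.card : ℝ) * ∏ i ∈ u, α i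
      = ∑ j ∈ u, (α j * ∏ i ∈ u.erase j, α i) := by
    intro u _
    rw [Finset.sum_congr rfl (fun j hj => by rw [Finset.mul_prod_erase _ _ hj]),
      Finset.sum_const, nsmul_eq_mul]
  rw [Finset.sum_congr rfl hR, Finset.sum_sigma', Finset.sum_sigma']
  refine Finset.sum_nbij' (fun x => ⟨insert x.2 x.1, x.2⟩) (fun y => ⟨y.1.erase y.2, y.2⟩)
    ?_ ?_ ?_ ?_ ?_
  · rintro ⟨v, j⟩ hx
    simp only [Finset.mem_sigma, Finset.mem_powersetCard, Finset.mem_sdiff] at hx ⊢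
    obtain ⟨⟨hvs, hvc⟩, hjs, hjv⟩ := hx
    exact ⟨⟨Finset.insert_subset hjs hvs, by rw [Finset.card_insert_of_notMem hjv, hvc]⟩,
      Finset.mem_insert_self _ _⟩
  · rintro ⟨u, j⟩ hy
    simp only [Finset.mem_sigma, Finset.mem_powersetCard, Finset.mem_sdiff] at hy ⊢
    obtain ⟨⟨hus, huc⟩, hju⟩ := hy
    refine ⟨⟨(Finset.erase_subset _ _).trans hus, ?_⟩, hus hju, Finset.notMem_erase _ _⟩
    rw [Finset.card_erase_of_mem hju, huc]; rfl
  · rintro ⟨v, j⟩ hx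
    simp only [Finset.mem_sigma, Finset.mem_powersetCard, Finset.mem_sdiff] at hx
    simp [Finset.erase_insert hx.2.2]
  · rintro ⟨u, j⟩ hy
    simp only [Finset.mem_sigma, Finset.mem_powersetCard, Finset.mem_sdiff] at hy
    simp [Finset.insert_erase hy.2]
  · rintro ⟨v, j⟩ hx
    simp only [Finset.mem_sigma, Finset.mem_powersetCard, Finset.mem_sdiff] at hx
    simp [Finset.erase_insert hx.2.2]

private lemma pow_bound (α : ℕ → ℝ) (hα : ∀ j, 0 ≤ α j) (s : Finset ℕ) (k : ℕ) :
    ∑ u ∈ s.powersetCard k, (k.factorial : ℝ) * ∏ j ∈ u, α j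
      ≤ (∑ j ∈ s, α j) ^ k := by
  induction k with
  | zero => simp
  | succ k ih =>
    have hS : 0 ≤ ∑ j ∈ s, α j := Finset.sum_nonneg fun j _ => hα j
    have hstep : ∑ u ∈ s.powersetCard (k + 1), ((k + 1).factorial : ℝ) * ∏ j ∈ u, α j
        = (k.factorial : ℝ) * ∑ v ∈ s.powersetCard k, ∑ j ∈ s \ v, (α j * ∏ i ∈ v, α i) := by
      rw [key_identity, Finset.mul_sum]
      refine Finset.sum_congr rfl fun u hu => ?_
      have hc : u.card = k + 1 := (Finset.mem_powersetCard.mp hu).2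
      rw [hc, Nat.factorial_succ]
      push_cast
      ring
    rw [hstep]
    have hbound : ∀ v ∈ s.powersetCard k,
        ∑ j ∈ s \ v, (α j * ∏ i ∈ v, α i) ≤ (∑ j ∈ s, α j) * ∏ i ∈ v, α i := by
      intro v _
      rw [← Finset.sum_mul]
      refine mul_le_mul_of_nonneg_right ?_ (Finset.prod_nonneg fun i _ => hα i)
      exact Finset.sum_le_sum_of_subset_of_nonneg (Finset.sdiff_subset) fun j hj _ => hα j
    calc (k.factorial : ℝ) * ∑ v ∈ s.powersetCard k, ∑ j ∈ s \ v, (α j * ∏ i ∈ v, α i)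
        ≤ (k.factorial : ℝ) * ∑ v ∈ s.powersetCard k, (∑ j ∈ s, α j) * ∏ i ∈ v, α i := by
          refine mul_le_mul_of_nonneg_left (Finset.sum_le_sum hbound)
            (by positivity)
      _ = (∑ j ∈ s, α j) * ∑ v ∈ s.powersetCard k, (k.factorial : ℝ) * ∏ i ∈ v, α i := by
          rw [Finset.mul_sum, Finset.mul_sum]
          refine Finset.sum_congr rfl fun v _ => by ring
      _ ≤ (∑ j ∈ s, α j) * (∑ j ∈ s, α j) ^ k := mul_le_mul_of_nonneg_left ih hS
      _ = (∑ j ∈ s, α j) ^ (k + 1) := (pow_succ' _ _).symm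

theorem stmt16 (α : ℕ → ℝ) (hα : ∀ j, 0 ≤ α j) (hsum : Summable α)
    (h1 : ∑' j, α j < 1) :
    ∑' u : Finset ℕ, ((u.card).factorial : ℝ) * ∏ j ∈ u, α j
      ≤ 1 / (1 - ∑' j, α j) := by
  set S := ∑' j, α j with hS
  have hS0 : 0 ≤ S := tsum_nonneg hα
  have hden : 0 < 1 - S := by linarith
  have hRHS : 0 < 1 / (1 - S) := by positivity
  set f : Finset ℕ → ℝ := fun u => ((u.card).factorial : ℝ) * ∏ j ∈ u, α j with hf
  have hfnn : ∀ u, 0 ≤ f u := fun u => by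
    exact mul_nonneg (by positivity) (Finset.prod_nonneg fun j _ => hα j)
  -- bound every finite partial sum
  have hpartial : ∀ F : Finset (Finset ℕ), ∑ u ∈ F, f u ≤ 1 / (1 - S) := by
    intro F
    set s : Finset ℕ := F.sup id with hsdef
    have hFsub : F ⊆ s.powerset := fun u hu =>
      Finset.mem_powerset.mpr (Finset.le_sup (f := id) hu)
    have h2 : ∑ u ∈ F, f u ≤ ∑ u ∈ s.powerset, f u :=
      Finset.sum_le_sum_of_subset_of_nonneg hFsub fun u _ _ => hfnn u
    have h3 : ∑ u ∈ s.powerset, f u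
        = ∑ k ∈ Finset.range (s.card + 1), ∑ u ∈ s.powersetCard k, f u := by
      rw [Finset.powerset_card_disjiUnion]; exact Finset.sum_disjiUnion _ _ _
    have hSs : ∑ j ∈ s, α j ≤ S :=
      Summable.sum_le_tsum s (fun j _ => hα j) hsum
    have hSs0 : 0 ≤ ∑ j ∈ s, α j := Finset.sum_nonneg fun j _ => hα j
    have h4 : ∀ k, ∑ u ∈ s.powersetCard k, f u ≤ S ^ k := by
      intro k
      have : ∑ u ∈ s.powersetCard k, f u
          ≤ ∑ u ∈ s.powersetCard k, (k.factorial : ℝ) * ∏ j ∈ u, α j := by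
        refine Finset.sum_le_sum fun u hu => ?_
        have hc : u.card = k := (Finset.mem_powersetCard.mp hu).2
        simp only [hf, hc, le_refl]
      calc ∑ u ∈ s.powersetCard k, f u
          ≤ (∑ j ∈ s, α j) ^ k := this.trans (pow_bound α hα s k)
        _ ≤ S ^ k := pow_le_pow_left₀ hSs0 hSs k
    have h5 : ∑ k ∈ Finset.range (s.card + 1), S ^ k ≤ 1 / (1 - S) := by
      have hgeo : ∑' k : ℕ, S ^ k = (1 - S)⁻¹ := tsum_geometric_of_lt_one hS0 h1
      have := Summable.sum_le_tsum (Finset.range (s.card + 1)) (fun k _ => pow_nonneg hS0 k)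
        (summable_geometric_of_lt_one hS0 h1)
      rw [hgeo] at this
      rwa [one_div]
    calc ∑ u ∈ F, f u ≤ ∑ k ∈ Finset.range (s.card + 1), ∑ u ∈ s.powersetCard k, f u :=
          h2.trans_eq h3
      _ ≤ ∑ k ∈ Finset.range (s.card + 1), S ^ k := Finset.sum_le_sum fun k _ => h4 k
      _ ≤ 1 / (1 - S) := h5
  by_cases hfs : Summable f
  · exact Summable.tsum_le_of_sum_le hfs hpartial
  · rw [tsum_eq_zero_of_not_summable hfs]
    exact hRHS.le
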